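/- Let k be a field of characteristic not two and s a non-split three-dimensional simple Lie algebra with Killing form K. Then K represents −2 if and only if s is isomorphic to L(−Δ,−Δ) for some Δ ∈ k*. -/

import Mathlib

/-- The bracket of `L(α,β)` on `k³`. -/
def Lbracket {k : Type*} [Field k] (α β : k) (u v : Fin 3 → k) : Fin 3 → k :=
  ![α * (u 1 * v 2 - u 2 * v 1), β * (u 2 * v 0 - u 0 * v 2), u 0 * v 1 - u 1 * v 0]


open LieAlgebra LinearMap Submodule

section PortInst

attribute [local instance 100] LieRing.ofAssociativeRing

lemma cube_eq_neg_self {k : Type*} [Field k] (hchar : (2:k) ≠ 0) (M : Matrix (Fin 3) (Fin 3) k)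
    (h1 : M.trace = 0) (h2 : (M*M).trace = -2) (h3 : M.det = 0) : M*M*M = -M := by
  simp only [Matrix.trace, Matrix.diag, Fin.sum_univ_three, Matrix.mul_apply] at h1 h2
  rw [Matrix.det_fin_three] at h3
  have e00 : (2:k) * ((M*M*M) 0 0) = 2 * (-(M 0 0)) := by
    simp only [Matrix.mul_apply, Fin.sum_univ_three]
    linear_combination (2*(M 0 0*M 0 0 + M 0 1*M 1 0 + M 0 2*M 2 0) - (M 0 0 + M 1 1 + M 2 2)*M 0 0)*h1 + (M 0 0)*h2 + 2*h3
  have e01 : (2:k) * ((M*M*M) 0 1) = 2 * (-(M 0 1)) := by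
    simp only [Matrix.mul_apply, Fin.sum_univ_three]
    linear_combination (2*(M 0 0*M 0 1 + M 0 1*M 1 1 + M 0 2*M 2 1) - (M 0 0 + M 1 1 + M 2 2)*M 0 1)*h1 + (M 0 1)*h2 + (0:k)*h3
  have e02 : (2:k) * ((M*M*M) 0 2) = 2 * (-(M 0 2)) := by
    simp only [Matrix.mul_apply, Fin.sum_univ_three]
    linear_combination (2*(M 0 0*M 0 2 + M 0 1*M 1 2 + M 0 2*M 2 2) - (M 0 0 + M 1 1 + M 2 2)*M 0 2)*h1 + (M 0 2)*h2 + (0:k)*h3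
  have e10 : (2:k) * ((M*M*M) 1 0) = 2 * (-(M 1 0)) := by
    simp only [Matrix.mul_apply, Fin.sum_univ_three]
    linear_combination (2*(M 1 0*M 0 0 + M 1 1*M 1 0 + M 1 2*M 2 0) - (M 0 0 + M 1 1 + M 2 2)*M 1 0)*h1 + (M 1 0)*h2 + (0:k)*h3
  have e11 : (2:k) * ((M*M*M) 1 1) = 2 * (-(M 1 1)) := by
    simp only [Matrix.mul_apply, Fin.sum_univ_three]
    linear_combination (2*(M 1 0*M 0 1 + M 1 1*M 1 1 + M 1 2*M 2 1) - (M 0 0 + M 1 1 + M 2 2)*M 1 1)*h1 + (M 1 1)*h2 + 2*h3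
  have e12 : (2:k) * ((M*M*M) 1 2) = 2 * (-(M 1 2)) := by
    simp only [Matrix.mul_apply, Fin.sum_univ_three]
    linear_combination (2*(M 1 0*M 0 2 + M 1 1*M 1 2 + M 1 2*M 2 2) - (M 0 0 + M 1 1 + M 2 2)*M 1 2)*h1 + (M 1 2)*h2 + (0:k)*h3
  have e20 : (2:k) * ((M*M*M) 2 0) = 2 * (-(M 2 0)) := by
    simp only [Matrix.mul_apply, Fin.sum_univ_three]
    linear_combination (2*(M 2 0*M 0 0 + M 2 1*M 1 0 + M 2 2*M 2 0) - (M 0 0 + M 1 1 + M 2 2)*M 2 0)*h1 + (M 2 0)*h2 + (0:k)*h3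
  have e21 : (2:k) * ((M*M*M) 2 1) = 2 * (-(M 2 1)) := by
    simp only [Matrix.mul_apply, Fin.sum_univ_three]
    linear_combination (2*(M 2 0*M 0 1 + M 2 1*M 1 1 + M 2 2*M 2 1) - (M 0 0 + M 1 1 + M 2 2)*M 2 1)*h1 + (M 2 1)*h2 + (0:k)*h3
  have e22 : (2:k) * ((M*M*M) 2 2) = 2 * (-(M 2 2)) := by
    simp only [Matrix.mul_apply, Fin.sum_univ_three]
    linear_combination (2*(M 2 0*M 0 2 + M 2 1*M 1 2 + M 2 2*M 2 2) - (M 0 0 + M 1 1 + M 2 2)*M 2 2)*h1 + (M 2 2)*h2 + 2*h3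
  ext i j
  fin_cases i <;> fin_cases j <;>
    [exact mul_left_cancel₀ hchar e00; exact mul_left_cancel₀ hchar e01;
     exact mul_left_cancel₀ hchar e02; exact mul_left_cancel₀ hchar e10;
     exact mul_left_cancel₀ hchar e11; exact mul_left_cancel₀ hchar e12;
     exact mul_left_cancel₀ hchar e20; exact mul_left_cancel₀ hchar e21;
     exact mul_left_cancel₀ hchar e22]


lemma trace_ad_zero {k L : Type*} [Field k] [LieRing L] [LieAlgebra k L] [Module.Finite k L]
    [LieAlgebra.IsSimple k L] (w : L) : trace k L ((ad k L w) : L →ₗ[k] L) = 0 := by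
  set φ : L →ₗ[k] k := (trace k L) ∘ₗ (ad k L).toLinearMap with hφ
  have hbr : ∀ x y : L, φ ⁅x, y⁆ = 0 := by
    intro x y
    have : ad k L ⁅x, y⁆ = ⁅ad k L x, ad k L y⁆ := LieHom.map_lie _ _ _
    simp only [hφ, LinearMap.comp_apply, LieHom.coe_toLinearMap, this, Ring.lie_def, map_sub,
      trace_mul_comm, sub_self]
  set I : LieIdeal k L := { LinearMap.ker φ with lie_mem := fun {x m} _ => hbr x m } with hI
  rcases LieAlgebra.IsSimple.eq_bot_or_eq_top I with hbot | htop
  · exfalso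
    apply LieAlgebra.IsSimple.non_abelian (R := k) (L := L)
    constructor
    intro x y
    have hxy : ⁅x, y⁆ ∈ I := hbr x y
    rw [hbot] at hxy
    simpa using hxy
  · have : w ∈ I := by rw [htop]; trivial
    exact this

lemma ad_cube {k L : Type*} [Field k] [LieRing L] [LieAlgebra k L] [Module.Finite k L]
    (hchar : (2:k) ≠ 0) (hdim : Module.finrank k L = 3) (v : L) (hv0 : v ≠ 0)
    (htr : trace k L ((ad k L v) : L →ₗ[k] L) = 0)
    (htr2 : trace k L (((ad k L v) : L →ₗ[k] L) ∘ₗ (ad k L v)) = -2)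
    (hCH : ∀ (M : Matrix (Fin 3) (Fin 3) k),
      M.trace = 0 → (M*M).trace = -2 → M.det = 0 → M*M*M = -M) :
    ∀ u : L, ⁅v, ⁅v, ⁅v, u⁆⁆⁆ = -⁅v, u⁆ := by
  intro u
  let b : Module.Basis (Fin 3) k L := Module.finBasisOfFinrankEq k L hdim
  set D : L →ₗ[k] L := (ad k L v : L →ₗ[k] L) with hD
  set M : Matrix (Fin 3) (Fin 3) k := LinearMap.toMatrix b b D with hM
  have h1 : M.trace = 0 := by rw [← LinearMap.trace_eq_matrix_trace]; exact htr
  have h2 : (M*M).trace = -2 := by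
    rw [← LinearMap.toMatrix_comp b b b, ← LinearMap.trace_eq_matrix_trace]; exact htr2
  have h3 : M.det = 0 := by
    rw [← Matrix.exists_mulVec_eq_zero_iff]
    refine ⟨b.repr v, ?_, ?_⟩
    · simpa using hv0
    · rw [LinearMap.toMatrix_mulVec_repr]
      have : D v = 0 := lie_self v
      rw [this]; simp
  have hM3 : M*M*M = -M := hCH M h1 h2 h3
  have : LinearMap.toMatrix b b (D ∘ₗ D ∘ₗ D) = LinearMap.toMatrix b b (-D) := by
    rw [LinearMap.toMatrix_comp b b b, LinearMap.toMatrix_comp b b b, map_neg, ← hM,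
      ← mul_assoc]
    exact hM3
  have hDD := (LinearMap.toMatrix b b).injective this
  have h := congrArg (fun f : L →ₗ[k] L => f u) hDD
  simp only [LinearMap.comp_apply, LinearMap.neg_apply, hD, ad_apply] at h
  exact h

section KRN2aux

lemma backward {k L : Type*} [Field k] [LieRing L] [LieAlgebra k L] [Module.Finite k L]
    (Δ : k) (hΔ : Δ ≠ 0) (f : L ≃ₗ[k] (Fin 3 → k))
    (hf : ∀ u v : L, f ⁅u, v⁆ = Lbracket (-Δ) (-Δ) (f u) (f v)) :
    ∃ v : L, killingForm k L v v = -2 := by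
  set c : Fin 3 → k := ![0, 0, Δ⁻¹] with hc
  refine ⟨f.symm c, ?_⟩
  set v : L := f.symm c with hv
  have had : ∀ u : L, ⁅v, u⁆ = f.symm (Lbracket (-Δ) (-Δ) c (f u)) := by
    intro u
    refine (LinearEquiv.eq_symm_apply f).mpr ?_
    rw [hf v u, hv, f.apply_symm_apply]
  set B : Module.Basis (Fin 3) k L := (Pi.basisFun k (Fin 3)).map f.symm with hB
  rw [killingForm_apply_apply, LinearMap.trace_eq_matrix_trace k B, Matrix.trace,
    Fin.sum_univ_three]
  have hrepr : ∀ (x : L) (i : Fin 3), B.repr x i = f x i := by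
    intro x i
    simp [hB, Module.Basis.map, Pi.basisFun_repr]
  have hentry : ∀ i : Fin 3, (LinearMap.toMatrix B B ((ad k L v) ∘ₗ (ad k L v))) i i
      = Lbracket (-Δ) (-Δ) c (Lbracket (-Δ) (-Δ) c (Pi.single i 1)) i := by
    intro i
    rw [LinearMap.toMatrix_apply, LinearMap.comp_apply, ad_apply, ad_apply, hrepr]
    have hBi : (B i : L) = f.symm (Pi.single i 1) := by simp [hB]
    rw [hBi, had, had, f.apply_symm_apply, f.apply_symm_apply, f.apply_symm_apply]
  rw [Matrix.diag_apply, Matrix.diag_apply, Matrix.diag_apply, hentry, hentry, hentry]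
  simp only [hc, Lbracket, Matrix.cons_val_zero, Matrix.cons_val_one, Matrix.head_cons,
    Matrix.cons_val_two, Matrix.tail_cons, Pi.single_apply]
  norm_num
  field_simp
  ring

variable {k L : Type*} [Field k] [LieRing L] [LieAlgebra k L] [Module.Finite k L]

lemma forward [LieAlgebra.IsSimple k L] (hchar : (2:k) ≠ 0)
    (hdim : Module.finrank k L = 3) (v : L)
    (htr : trace k L ((ad k L v) : L →ₗ[k] L) = 0)
    (htr2 : trace k L (((ad k L v) : L →ₗ[k] L) ∘ₗ (ad k L v)) = -2)
    (hcube : ∀ u : L, ⁅v, ⁅v, ⁅v, u⁆⁆⁆ = -⁅v, u⁆) :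
    ∃ Δ : k, Δ ≠ 0 ∧ ∃ f : L ≃ₗ[k] (Fin 3 → k),
      ∀ u w : L, f ⁅u, w⁆ = Lbracket (-Δ) (-Δ) (f u) (f w) := by
  have hv0 : v ≠ 0 := by
    rintro rfl
    rw [show ((ad k L (0:L)) : L →ₗ[k] L) = 0 by ext u; simp] at htr2
    rw [LinearMap.comp_zero, map_zero] at htr2
    exact hchar (by linear_combination htr2)
  by_cases hcase : ∀ u : L, ⁅v, u⁆ = 0 ∨ ∃ a : k, ⁅v, ⁅v, u⁆⁆ = a • ⁅v, u⁆
  · exfalso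
    by_cases hall : ∀ u : L, ⁅v, u⁆ = 0
    · rw [show (((ad k L v) : L →ₗ[k] L) ∘ₗ (ad k L v)) = 0 by ext u; simp [hall]] at htr2
      rw [map_zero] at htr2
      exact hchar (by linear_combination htr2)
    · push_neg at hall
      obtain ⟨u₀, hu₀⟩ := hall
      obtain ⟨c, hc⟩ := (hcase u₀).resolve_left hu₀
      have key : ∀ w : L, ⁅v, ⁅v, w⁆⁆ = c • ⁅v, w⁆ := by
        intro w
        by_cases hw : ⁅v, w⁆ = 0
        · rw [hw]; simp
        obtain ⟨a, ha⟩ := (hcase w).resolve_left hw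
        by_cases hlam : ∃ lam : k, ⁅v, w⁆ = lam • ⁅v, u₀⁆
        · obtain ⟨lam, hl⟩ := hlam
          rw [hl, lie_smul, hc, smul_smul, smul_smul, mul_comm]
        · push_neg at hlam
          have hsum : ⁅v, u₀ + w⁆ ≠ 0 := by
            intro h0
            rw [lie_add] at h0
            exact hlam (-1) (by rw [neg_one_smul, ← eq_neg_of_add_eq_zero_right h0])
          obtain ⟨e, he⟩ := (hcase (u₀ + w)).resolve_left hsum
          rw [lie_add, lie_add, hc, ha, smul_add] at he
          have hae : a = e := by
            by_contra hne
            apply hlam ((a - e)⁻¹ * (e - c))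
            have hsub : (a - e) • ⁅v, w⁆ = (e - c) • ⁅v, u₀⁆ := by
              linear_combination (norm := module) he
            have := congrArg (fun z : L => (a - e)⁻¹ • z) hsub
            simpa [smul_smul, inv_mul_cancel₀ (sub_ne_zero.mpr hne)] using this
          have hce : c = e := by
            rw [hae] at he
            have h2 : (c - e) • ⁅v, u₀⁆ = 0 := by
              linear_combination (norm := module) he
            rcases smul_eq_zero.mp h2 with h | h
            · exact sub_eq_zero.mp h
            · exact absurd h hu₀
          rw [ha, hae, hce]
      have hDD : (((ad k L v) : L →ₗ[k] L) ∘ₗ (ad k L v)) = c • ((ad k L v) : L →ₗ[k] L) := by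
        ext w; simpa using key w
      rw [hDD, map_smul, htr, smul_eq_mul, mul_zero] at htr2
      exact hchar (by linear_combination htr2)
  · push_neg at hcase
    obtain ⟨u₀, hx0, hnl⟩ := hcase
    set x : L := ⁅v, u₀⁆ with hxdef
    set y : L := ⁅v, x⁆ with hydef
    have hvx : ⁅v, x⁆ = y := rfl
    have hvy : ⁅v, y⁆ = -x := hcube u₀
    have hpair : ∀ a : k, y ≠ a • x := hnl
    have hy0 : y ≠ 0 := fun h => hpair 0 (by rw [h, zero_smul])
    have hxv : ⁅x, v⁆ = -y := by rw [← lie_skew, hvx]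
    have hyv : ⁅y, v⁆ = x := by rw [← lie_skew, hvy, neg_neg]
    have hsolve : ∀ a b : k, a • y = b • x → a = 0 ∧ b = 0 := by
      intro a b hab
      by_cases ha : a = 0
      · subst ha
        rw [zero_smul] at hab
        rcases smul_eq_zero.mp hab.symm with h | h
        · exact ⟨rfl, h⟩
        · exact absurd h hx0
      · exfalso
        apply hpair (a⁻¹ * b)
        have := congrArg (fun z : L => a⁻¹ • z) hab
        simpa [smul_smul, inv_mul_cancel₀ ha] using this
    have hnotin : ∀ a b : k, v ≠ a • x + b • y := by
      intro a b hveq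
      have h0 : a • y + b • (-x) = 0 := by
        have := congrArg (fun z : L => ⁅v, z⁆) hveq
        simp only [lie_self, lie_add, lie_smul, hvx, hvy] at this
        exact this.symm
      have : a • y = b • x := by
        rw [smul_neg] at h0
        linear_combination (norm := module) h0
      obtain ⟨h1, h2⟩ := hsolve a b this
      rw [h1, h2, zero_smul, zero_smul, add_zero] at hveq
      exact hv0 hveq
    have htriple : ∀ t : k, t ≠ 0 → LinearIndependent k ![x, y, t • v] := by
      intro t ht
      have h1 : LinearIndependent k ![(t • v : L)] :=
        LinearIndependent.of_subsingleton (0 : Fin 1) (by simp [smul_eq_zero, ht, hv0])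
      have h2 : LinearIndependent k ![y, t • v] := by
        apply linearIndependent_fin_cons.mpr
        refine ⟨h1, ?_⟩
        intro hmem
        rw [show Set.range ![(t • v : L)] = {t • v} by
          simp [Matrix.range_cons, Matrix.range_empty]] at hmem
        obtain ⟨d, hd⟩ := Submodule.mem_span_singleton.mp hmem
        have := congrArg (fun z : L => ⁅v, z⁆) hd
        simp only [lie_smul, lie_self, smul_zero, hvy] at this
        exact hx0 (neg_eq_zero.mp this.symm)
      apply linearIndependent_fin_cons.mpr
      refine ⟨h2, ?_⟩
      intro hmem
      rw [show Set.range ![y, (t • v : L)] = {y, t • v} by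
        simp [Matrix.range_cons, Matrix.range_empty, Set.pair_comm]] at hmem
      obtain ⟨a, b, hab⟩ := Submodule.mem_span_pair.mp hmem
      have := congrArg (fun z : L => ⁅v, z⁆) hab
      simp only [lie_add, lie_smul, lie_self, smul_zero, add_zero, hvx, hvy] at this
      rw [smul_neg, ← neg_smul] at this
      exact hpair (-a) this.symm
    have hcard : Fintype.card (Fin 3) = Module.finrank k L := by simp [hdim]
    have htriple1 : LinearIndependent k ![x, y, v] := by
      have := htriple 1 one_ne_zero
      rwa [one_smul] at this
    set B0 : Module.Basis (Fin 3) k L := basisOfLinearIndependentOfCardEqFinrank htriple1 hcard with hB0def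
    have hB0 : ⇑B0 = ![x, y, v] := coe_basisOfLinearIndependentOfCardEqFinrank htriple1 hcard
    have hB00 : B0 0 = x := by rw [hB0]; rfl
    have hB01 : B0 1 = y := by rw [hB0]; rfl
    have hB02 : B0 2 = v := by rw [hB0]; rfl
    have hdecomp : ∀ w : L,
        w = B0.equivFun w 0 • x + B0.equivFun w 1 • y + B0.equivFun w 2 • v := by
      intro w
      have hs := B0.sum_equivFun w
      rw [Fin.sum_univ_three, hB00, hB01, hB02] at hs
      exact hs.symm
    have hker : ∀ w : L, ⁅v, w⁆ = 0 → ∃ t : k, w = t • v := by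
      intro w hw
      have hwd := hdecomp w
      have hbr : ⁅v, w⁆ = B0.equivFun w 0 • y + B0.equivFun w 1 • (-x) := by
        conv_lhs => rw [hwd]
        simp only [lie_add, lie_smul, lie_self, smul_zero, add_zero, hvx, hvy]
      rw [hw] at hbr
      have h0 : B0.equivFun w 0 • y = B0.equivFun w 1 • x := by
        rw [smul_neg] at hbr
        linear_combination (norm := module) -hbr
      obtain ⟨h1, h2⟩ := hsolve _ _ h0
      rw [h1, h2, zero_smul, zero_smul, zero_add, zero_add] at hwd
      exact ⟨_, hwd⟩
    have hzker : ⁅v, ⁅x, y⁆⁆ = 0 := by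
      rw [leibniz_lie, hvx, hvy]
      simp [lie_self, lie_neg]
    obtain ⟨Δ, hΔeq⟩ := hker _ hzker
    have hΔ0 : Δ ≠ 0 := by
      rintro rfl
      rw [zero_smul] at hΔeq
      have hyx : ⁅y, x⁆ = 0 := by rw [← lie_skew, hΔeq, neg_zero]
      set S : Submodule k L := Submodule.span k {x, y} with hSdef
      have hxS : x ∈ S := Submodule.subset_span (Set.mem_insert _ _)
      have hyS : y ∈ S := Submodule.subset_span (Set.mem_insert_of_mem _ rfl)
      have hlie : ∀ (l m : L), m ∈ S → ⁅l, m⁆ ∈ S := by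
        intro l m hm
        have hlx : ⁅l, x⁆ = B0.equivFun l 2 • y := by
          conv_lhs => rw [hdecomp l]
          simp only [add_lie, smul_lie, lie_self, hyx, hvx, smul_zero, zero_add]
        have hly : ⁅l, y⁆ = B0.equivFun l 2 • (-x) := by
          conv_lhs => rw [hdecomp l]
          simp only [add_lie, smul_lie, lie_self, hΔeq, hvy, smul_zero, zero_add]
        obtain ⟨a, b, hab⟩ := Submodule.mem_span_pair.mp hm
        rw [← hab, lie_add, lie_smul, lie_smul, hlx, hly]
        exact S.add_mem (S.smul_mem _ (S.smul_mem _ hyS))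
          (S.smul_mem _ (S.smul_mem _ (S.neg_mem hxS)))
      set I : LieIdeal k L := { S with lie_mem := fun {l m} hm => hlie l m hm } with hIdef
      have hmemI : ∀ w : L, w ∈ I ↔ w ∈ S := fun w => Iff.rfl
      rcases LieAlgebra.IsSimple.eq_bot_or_eq_top I with hb | ht
      · have : x ∈ I := (hmemI x).mpr hxS
        rw [hb] at this
        exact hx0 (by simpa using this)
      · have : v ∈ I := by rw [ht]; trivial
        obtain ⟨a, b, hab⟩ := Submodule.mem_span_pair.mp ((hmemI v).mp this)
        exact hnotin a b hab.symm
    refine ⟨-Δ, neg_ne_zero.mpr hΔ0, ?_⟩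
    have htripleΔ := htriple Δ hΔ0
    set B : Module.Basis (Fin 3) k L :=
      basisOfLinearIndependentOfCardEqFinrank htripleΔ hcard with hBdef
    have hBc : ⇑B = ![x, y, Δ • v] := coe_basisOfLinearIndependentOfCardEqFinrank htripleΔ hcard
    have hBc0 : B 0 = x := by rw [hBc]; rfl
    have hBc1 : B 1 = y := by rw [hBc]; rfl
    have hBc2 : B 2 = Δ • v := by rw [hBc]; rfl
    refine ⟨B.equivFun, ?_⟩
    have hxy : ⁅x, y⁆ = Δ • v := hΔeq
    have hyx : ⁅y, x⁆ = -(Δ • v) := by rw [← lie_skew, hxy]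
    have key2 : ∀ c d : Fin 3 → k,
        ⁅B.equivFun.symm c, B.equivFun.symm d⁆ = B.equivFun.symm (Lbracket Δ Δ c d) := by
      intro c d
      rw [Module.Basis.equivFun_symm_apply, Module.Basis.equivFun_symm_apply, Module.Basis.equivFun_symm_apply,
        Fin.sum_univ_three, Fin.sum_univ_three, Fin.sum_univ_three, hBc0, hBc1, hBc2]
      simp only [Lbracket, Matrix.cons_val_zero, Matrix.cons_val_one, Matrix.head_cons,
        Matrix.cons_val_two, Matrix.tail_cons]
      simp only [lie_add, add_lie, lie_smul, smul_lie, lie_self, smul_zero, zero_add, add_zero,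
        hxy, hyx, hxv, hyv, hvx, hvy, smul_neg, smul_smul]
      module
    intro u w
    rw [neg_neg]
    calc B.equivFun ⁅u, w⁆
        = B.equivFun ⁅B.equivFun.symm (B.equivFun u), B.equivFun.symm (B.equivFun w)⁆ := by
          rw [LinearEquiv.symm_apply_apply, LinearEquiv.symm_apply_apply]
      _ = B.equivFun (B.equivFun.symm (Lbracket Δ Δ (B.equivFun u) (B.equivFun w))) := by
          rw [key2]
      _ = Lbracket Δ Δ (B.equivFun u) (B.equivFun w) := B.equivFun.apply_symm_apply _

end KRN2aux

end PortInst

/-- For a non-split three-dimensional simple Lie algebra `s` over `k` (char ≠ 2) with Killing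
form `K`: `K` represents `−2` if and only if `s ≅ L(−Δ,−Δ)` for some `Δ ∈ k*`. -/
theorem killing_represents_neg_two_iff (k : Type*) [Field k] (hchar : (2 : k) ≠ 0)
    (L : Type*) [LieRing L] [LieAlgebra k L] [Module.Finite k L]
    (hdim : Module.finrank k L = 3) [LieAlgebra.IsSimple k L]
    (hnonsplit : ¬ Nonempty (L ≃ₗ⁅k⁆ LieAlgebra.SpecialLinear.sl (Fin 2) k)) :
    (∃ v : L, killingForm k L v v = -2) ↔
      ∃ Δ : k, Δ ≠ 0 ∧ ∃ f : L ≃ₗ[k] (Fin 3 → k),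
        ∀ u v : L, f ⁅u, v⁆ = Lbracket (-Δ) (-Δ) (f u) (f v) := by
  constructor
  · rintro ⟨v, hv⟩
    have htr2 : LinearMap.trace k L
        (((ad k L v) : L →ₗ[k] L) ∘ₗ (ad k L v)) = -2 := by
      rw [← killingForm_apply_apply]; exact hv
    have htr := trace_ad_zero (k := k) v
    have hv0 : v ≠ 0 := by
      rintro rfl
      rw [show ((ad k L (0:L)) : L →ₗ[k] L) = 0 by ext u; simp] at htr2
      rw [LinearMap.comp_zero, map_zero] at htr2
      exact hchar (by linear_combination htr2)
    have hcube := ad_cube hchar hdim v hv0 htr htr2 (fun M => cube_eq_neg_self hchar M)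
    exact forward hchar hdim v htr htr2 hcube
  · rintro ⟨Δ, hΔ, f, hf⟩
    exact backward Δ hΔ f hf
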